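/- For any real Hadamard matrix H ∈ M_N({±1}), the normalized glow moments satisfy E[(φ/N)^{2p}] = (2p-1)!! + O(1/N), where φ(a,b) = Σ_{ij} a_i b_j H_{ij} and (a,b) is uniform on {±1}^N × {±1}^N. Consequently φ/N converges in moments to a standard real Gaussian as N → ∞. -/

import Mathlib

open Finset

/-- Sign of a boolean switch. -/
def sgn (b : Bool) : ℝ := if b then 1 else -1


lemma sum_sgn_pow (x : ℝ) (m : ℕ) :
    ∑ b : Bool, (sgn b * x) ^ m = if Even m then 2 * x ^ m else 0 := by
  rcases Nat.even_or_odd m with h | h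
  · simp [sgn, mul_pow, h.neg_one_pow, two_mul, h]
  · simp [sgn, neg_mul, h.neg_pow, Nat.not_even_iff_odd.2 h]

lemma rad_moment (N p : ℕ) (c : Fin N → ℝ) :
    ∑ δ : Fin N → Bool, (∑ j, sgn (δ j) * c j) ^ (2 * p)
      = 2 ^ N * ∑ k ∈ piAntidiag (univ : Finset (Fin N)) p,
          (Nat.multinomial univ (fun j => 2 * k j) : ℝ) * ∏ j, (c j ^ 2) ^ k j := by
  have step1 : ∀ δ : Fin N → Bool,
      (∑ j, sgn (δ j) * c j) ^ (2 * p)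
        = ∑ m ∈ piAntidiag (univ : Finset (Fin N)) (2 * p),
            (Nat.multinomial univ m : ℝ) * ∏ j, (sgn (δ j) * c j) ^ m j := fun δ =>
    Finset.sum_pow_eq_sum_piAntidiag univ _ (2 * p)
  simp_rw [step1]
  rw [Finset.sum_comm]
  have step2 : ∀ m : Fin N → ℕ,
      ∑ δ : Fin N → Bool, (Nat.multinomial univ m : ℝ) * ∏ j, (sgn (δ j) * c j) ^ m j
        = (Nat.multinomial univ m : ℝ) *
            (if (∀ j, Even (m j)) then (2:ℝ) ^ N * ∏ j, c j ^ m j else 0) := by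
    intro m
    rw [← Finset.mul_sum]
    congr 1
    have := Finset.prod_univ_sum (fun _ : Fin N => (univ : Finset Bool))
      (fun j b => (sgn b * c j) ^ m j)
    rw [Fintype.piFinset_univ] at this
    rw [← this]
    by_cases h : ∀ j, Even (m j)
    · rw [if_pos h]
      have : ∀ j : Fin N, (∑ b : Bool, (sgn b * c j) ^ m j) = 2 * c j ^ m j := fun j => by
        rw [sum_sgn_pow, if_pos (h j)]
      rw [Finset.prod_congr rfl fun j _ => this j, Finset.prod_mul_distrib,
        Finset.prod_const, Finset.card_univ, Fintype.card_fin]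
    · push_neg at h
      obtain ⟨j, hj⟩ := h
      rw [if_neg (by push_neg; exact ⟨j, hj⟩)]
      apply Finset.prod_eq_zero (Finset.mem_univ j)
      rw [sum_sgn_pow, if_neg hj]
  simp_rw [step2, mul_ite, mul_zero, ← Finset.sum_filter]
  rw [Finset.mul_sum]
  refine (Finset.sum_nbij' (i := fun (k : Fin N → ℕ) => fun j => 2 * k j)
    (j := fun (m : Fin N → ℕ) => fun j => m j / 2) ?_ ?_ ?_ ?_ ?_).symm
  · intro k hk
    simp only [Finset.mem_filter, Finset.mem_piAntidiag] at hk ⊢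
    refine ⟨⟨?_, fun i _ => Finset.mem_univ i⟩, fun j => even_two_mul (k j)⟩
    rw [← Finset.mul_sum, hk.1]
  · intro m hm
    simp only [Finset.mem_filter, Finset.mem_piAntidiag] at hm ⊢
    refine ⟨?_, fun i _ => Finset.mem_univ i⟩
    have h2 : ∀ j, m j / 2 * 2 = m j := fun j => Nat.div_mul_cancel (hm.2 j).two_dvd
    have hs : (∑ j, m j / 2) * 2 = 2 * p := by
      rw [Finset.sum_mul]
      simp_rw [h2]
      exact hm.1.1
    omega
  · intro k _
    funext j
    simp only
    omega
  · intro m hm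
    simp only [Finset.mem_filter, Finset.mem_piAntidiag] at hm
    funext j
    have := (hm.2 j).two_dvd
    simp only
    omega
  · intro k _
    have hprod : ∏ j, (c j ^ 2) ^ k j = ∏ j, c j ^ (2 * k j) :=
      Finset.prod_congr rfl fun j _ => by rw [pow_mul]
    rw [hprod]
    ring

lemma two_pow_mul_factorial_dvd (p : ℕ) : 2 ^ p * p.factorial ∣ (2 * p).factorial := by
  rcases p with _ | q
  · simp
  · have h := Nat.factorial_eq_mul_doubleFactorial (2 * (q + 1) - 1)
    have h2 : 2 * (q + 1) - 1 + 1 = 2 * (q + 1) := by omega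
    rw [h2, Nat.doubleFactorial_two_mul] at h
    exact Dvd.intro _ (by rw [h, Nat.mul_comm])

lemma df_mul (p : ℕ) :
    ((2 * p).factorial / (2 ^ p * p.factorial)) * (2 ^ p * p.factorial) = (2 * p).factorial :=
  Nat.div_mul_cancel (two_pow_mul_factorial_dvd p)

lemma coeff_eq (N p : ℕ) (k : Fin N → ℕ) (hk : ∑ j, k j = p) (h1 : ∀ j, k j ≤ 1) :
    Nat.multinomial univ (fun j => 2 * k j)
      = ((2 * p).factorial / (2 ^ p * p.factorial)) * Nat.multinomial univ k := by
  have hprod1 : ∏ j, (k j).factorial = 1 := by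
    apply Finset.prod_eq_one
    intro j _
    have := h1 j
    interval_cases h : k j <;> simp
  have hm1 : Nat.multinomial univ k = p.factorial := by
    have := Nat.multinomial_spec (univ : Finset (Fin N)) k
    rw [hprod1, one_mul] at this
    rw [this, hk]
  have hprod2 : ∏ j, (2 * k j).factorial = 2 ^ p := by
    have : ∀ j : Fin N, (2 * k j).factorial = 2 ^ k j := by
      intro j
      have := h1 j
      interval_cases h : k j <;> simp [Nat.factorial]
    rw [Finset.prod_congr rfl fun j _ => this j, Finset.prod_pow_eq_pow_sum, hk]
  have hm2 := Nat.multinomial_spec (univ : Finset (Fin N)) (fun j => 2 * k j)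
  rw [hprod2] at hm2
  have hsum2 : ∑ j, 2 * k j = 2 * p := by rw [← Finset.mul_sum, hk]
  rw [hsum2] at hm2
  have hdf := df_mul p
  apply Nat.eq_of_mul_eq_mul_left (show 0 < 2 ^ p by positivity)
  rw [hm2, hm1, Nat.mul_left_comm, hdf]

lemma sum_prod_sq_le (N q : ℕ) (c : Fin N → ℝ) :
    ∑ k ∈ piAntidiag (univ : Finset (Fin N)) q, ∏ j, (c j ^ 2) ^ k j
      ≤ (∑ j, c j ^ 2) ^ q := by
  rw [Finset.sum_pow_eq_sum_piAntidiag]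
  apply Finset.sum_le_sum
  intro k _
  have ht : (0:ℝ) ≤ ∏ j, (c j ^ 2) ^ k j :=
    Finset.prod_nonneg fun j _ => pow_nonneg (sq_nonneg _) _
  have h1 : (1:ℝ) ≤ (Nat.multinomial univ k : ℝ) := by
    exact_mod_cast Nat.one_le_iff_ne_zero.2 (Nat.multinomial_pos _ _).ne'
  exact le_mul_of_one_le_left ht h1

lemma bad_filter_le (N p : ℕ) (c : Fin N → ℝ) (j : Fin N) :
    ∑ k ∈ (piAntidiag (univ : Finset (Fin N)) p).filter (fun k => 2 ≤ k j),
        ∏ i, (c i ^ 2) ^ k i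
      ≤ c j ^ 4 * (∑ i, c i ^ 2) ^ (p - 2) := by
  by_cases hp : 2 ≤ p
  · have key : ∑ k ∈ (piAntidiag (univ : Finset (Fin N)) p).filter (fun k => 2 ≤ k j),
        ∏ i, (c i ^ 2) ^ k i
        = c j ^ 4 * ∑ k' ∈ piAntidiag (univ : Finset (Fin N)) (p - 2),
            ∏ i, (c i ^ 2) ^ k' i := by
      rw [Finset.mul_sum]
      apply Finset.sum_nbij' (i := fun k => Function.update k j (k j - 2))
        (j := fun k => Function.update k j (k j + 2))
      · intro k hk
        simp only [Finset.mem_filter, Finset.mem_piAntidiag] at hk ⊢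
        obtain ⟨⟨hsum, -⟩, h2⟩ := hk
        refine ⟨?_, fun i _ => Finset.mem_univ i⟩
        rw [Finset.sum_update_of_mem (Finset.mem_univ j), Finset.sdiff_singleton_eq_erase]
        rw [← Finset.sum_erase_add _ _ (Finset.mem_univ j)] at hsum
        omega
      · intro k hk
        simp only [Finset.mem_filter, Finset.mem_piAntidiag] at hk ⊢
        obtain ⟨hsum, -⟩ := hk
        refine ⟨⟨?_, fun i _ => Finset.mem_univ i⟩, by simp⟩
        rw [Finset.sum_update_of_mem (Finset.mem_univ j), Finset.sdiff_singleton_eq_erase]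
        rw [← Finset.sum_erase_add _ _ (Finset.mem_univ j)] at hsum
        omega
      · intro k hk
        simp only [Finset.mem_filter] at hk
        funext x
        rcases eq_or_ne x j with rfl | hx
        · simp only [Function.update_self]
          omega
        · simp [Function.update_of_ne hx]
      · intro k _
        funext x
        rcases eq_or_ne x j with rfl | hx
        · simp only [Function.update_self]
          omega
        · simp [Function.update_of_ne hx]
      · intro k hk
        simp only [Finset.mem_filter, Finset.mem_piAntidiag] at hk
        obtain ⟨-, h2⟩ := hk
        rw [← Finset.mul_prod_erase _ _ (Finset.mem_univ j),
          ← Finset.mul_prod_erase _ _ (Finset.mem_univ j)]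
        have herase : ∏ i ∈ univ.erase j, (c i ^ 2) ^ Function.update k j (k j - 2) i
            = ∏ i ∈ univ.erase j, (c i ^ 2) ^ k i :=
          Finset.prod_congr rfl fun i hi =>
            by rw [Function.update_of_ne (Finset.ne_of_mem_erase hi)]
        rw [herase, Function.update_self]
        have hpow : (c j ^ 2) ^ k j = c j ^ 4 * (c j ^ 2) ^ (k j - 2) := by
          have h : k j = 2 + (k j - 2) := by omega
          conv_lhs => rw [h]
          rw [pow_add]
          ring
        rw [hpow]
        ring
    rw [key]
    have h4 : (0:ℝ) ≤ c j ^ 4 := by positivity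
    exact mul_le_mul_of_nonneg_left (sum_prod_sq_le N (p - 2) c) h4
  · have hempty : (piAntidiag (univ : Finset (Fin N)) p).filter (fun k => 2 ≤ k j) = ∅ := by
      rw [Finset.filter_eq_empty_iff]
      intro k hk
      simp only [Finset.mem_piAntidiag] at hk
      have hle : k j ≤ ∑ i, k i := Finset.single_le_sum (fun i _ => Nat.zero_le _) (Finset.mem_univ j)
      have hs : univ.sum k = ∑ i, k i := rfl
      omega
    rw [hempty]
    simp only [Finset.sum_empty]
    positivity

lemma moment_compare (N p : ℕ) (c : Fin N → ℝ) :
    |(∑ k ∈ piAntidiag (univ : Finset (Fin N)) p,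
        (Nat.multinomial univ (fun j => 2 * k j) : ℝ) * ∏ j, (c j ^ 2) ^ k j)
      - ((Nat.factorial (2 * p) / (2 ^ p * Nat.factorial p) : ℕ) : ℝ) * (∑ j, c j ^ 2) ^ p|
    ≤ ((Nat.factorial (2 * p) * (Nat.factorial p + 1) : ℕ) : ℝ)
        * ((∑ j, c j ^ 4) * (∑ j, c j ^ 2) ^ (p - 2)) := by
  classical
  set P := piAntidiag (univ : Finset (Fin N)) p with hP
  set t : (Fin N → ℕ) → ℝ := fun k => ∏ j, (c j ^ 2) ^ k j with hT
  have ht : ∀ k, 0 ≤ t k := fun k =>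
    Finset.prod_nonneg fun j _ => pow_nonneg (sq_nonneg _) _
  have hite : ∀ (k : Fin N → ℕ) (j : Fin N), (0:ℝ) ≤ if 2 ≤ k j then t k else 0 :=
    fun k j => by split <;> [exact ht k; exact le_rfl]
  set df : ℕ := Nat.factorial (2 * p) / (2 ^ p * Nat.factorial p) with hdf
  set K : ℕ := Nat.factorial (2 * p) * (Nat.factorial p + 1) with hK
  have hpow : ((df : ℝ)) * (∑ j, c j ^ 2) ^ p
      = ∑ k ∈ P, (df : ℝ) * ((Nat.multinomial univ k : ℝ) * t k) := by
    rw [Finset.sum_pow_eq_sum_piAntidiag, Finset.mul_sum]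
  rw [hpow, ← Finset.sum_sub_distrib]
  refine le_trans (Finset.abs_sum_le_sum_abs _ _) ?_
  have habs : ∀ k ∈ P,
      |(Nat.multinomial univ (fun j => 2 * k j) : ℝ) * t k
        - (df : ℝ) * ((Nat.multinomial univ k : ℝ) * t k)|
      = |(Nat.multinomial univ (fun j => 2 * k j) : ℝ)
          - (df : ℝ) * (Nat.multinomial univ k : ℝ)| * t k := by
    intro k _
    have h : (Nat.multinomial univ (fun j => 2 * k j) : ℝ) * t k
        - (df : ℝ) * ((Nat.multinomial univ k : ℝ) * t k)
        = ((Nat.multinomial univ (fun j => 2 * k j) : ℝ)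
            - (df : ℝ) * (Nat.multinomial univ k : ℝ)) * t k := by ring
    rw [h, abs_mul, abs_of_nonneg (ht k)]
  rw [Finset.sum_congr rfl habs]
  rw [← Finset.sum_filter_add_sum_filter_not P (fun k => ∃ j, 2 ≤ k j)]
  have hgood : ∑ k ∈ P.filter (fun k => ¬∃ j, 2 ≤ k j),
      |(Nat.multinomial univ (fun j => 2 * k j) : ℝ)
        - (df : ℝ) * (Nat.multinomial univ k : ℝ)| * t k = 0 := by
    apply Finset.sum_eq_zero
    intro k hk
    simp only [Finset.mem_filter, Finset.mem_piAntidiag, not_exists, not_le, hP] at hk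
    have h1 : ∀ j, k j ≤ 1 := fun j => by have := hk.2 j; omega
    have hsum : ∑ j, k j = p := hk.1.1
    rw [coeff_eq N p k hsum h1, Nat.cast_mul, sub_self, abs_zero, zero_mul]
  rw [hgood, add_zero]
  have hcoeff : ∀ k ∈ P.filter (fun k => ∃ j, 2 ≤ k j),
      |(Nat.multinomial univ (fun j => 2 * k j) : ℝ)
        - (df : ℝ) * (Nat.multinomial univ k : ℝ)| * t k ≤ (K : ℝ) * t k := by
    intro k hk
    simp only [Finset.mem_filter, Finset.mem_piAntidiag, hP] at hk
    have hsum : ∑ j, k j = p := hk.1.1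
    have specA := Nat.multinomial_spec (univ : Finset (Fin N)) (fun j => 2 * k j)
    have hsum2 : ∑ j, 2 * k j = 2 * p := by rw [← Finset.mul_sum, hsum]
    rw [hsum2] at specA
    have hA : Nat.multinomial univ (fun j => 2 * k j) ≤ Nat.factorial (2 * p) := by
      calc Nat.multinomial univ (fun j => 2 * k j)
          ≤ (∏ j, (2 * k j).factorial) * Nat.multinomial univ (fun j => 2 * k j) :=
            Nat.le_mul_of_pos_left _ (Finset.prod_pos fun j _ => Nat.factorial_pos _)
        _ = Nat.factorial (2 * p) := specA
    have specB := Nat.multinomial_spec (univ : Finset (Fin N)) k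
    rw [hsum] at specB
    have hB : Nat.multinomial univ k ≤ Nat.factorial p := by
      calc Nat.multinomial univ k
          ≤ (∏ j, (k j).factorial) * Nat.multinomial univ k :=
            Nat.le_mul_of_pos_left _ (Finset.prod_pos fun j _ => Nat.factorial_pos _)
        _ = Nat.factorial p := specB
    have hdfle : df ≤ Nat.factorial (2 * p) := Nat.div_le_self _ _
    apply mul_le_mul_of_nonneg_right _ (ht k)
    rw [abs_sub_le_iff]
    have cA : (Nat.multinomial univ (fun j => 2 * k j) : ℝ) ≤ (Nat.factorial (2 * p) : ℝ) := by
      exact_mod_cast hA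
    have cB : (df : ℝ) * (Nat.multinomial univ k : ℝ)
        ≤ (Nat.factorial (2 * p) : ℝ) * (Nat.factorial p : ℝ) := by
      exact_mod_cast Nat.mul_le_mul hdfle hB
    have cK : (K : ℝ) = (Nat.factorial (2 * p) : ℝ) * (Nat.factorial p : ℝ)
        + (Nat.factorial (2 * p) : ℝ) := by
      rw [hK]; push_cast; ring
    have hposA : (0:ℝ) ≤ (Nat.multinomial univ (fun j => 2 * k j) : ℝ) := Nat.cast_nonneg _
    have hposB : (0:ℝ) ≤ (df : ℝ) * (Nat.multinomial univ k : ℝ) := by positivity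
    constructor <;> linarith
  refine le_trans (Finset.sum_le_sum hcoeff) ?_
  rw [← Finset.mul_sum]
  refine mul_le_mul_of_nonneg_left ?_ (Nat.cast_nonneg K)
  have hstep : ∑ k ∈ P.filter (fun k => ∃ j, 2 ≤ k j), t k
      ≤ ∑ j : Fin N, ∑ k ∈ P.filter (fun k => 2 ≤ k j), t k := by
    have h1 : ∀ k ∈ P.filter (fun k => ∃ j, 2 ≤ k j),
        t k ≤ ∑ j : Fin N, (if 2 ≤ k j then t k else 0) := by
      intro k hk
      simp only [Finset.mem_filter] at hk
      obtain ⟨-, j0, hj0⟩ := hk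
      have := Finset.single_le_sum (f := fun j => if 2 ≤ k j then t k else 0)
        (fun j _ => hite k j) (Finset.mem_univ j0)
      rwa [if_pos hj0] at this
    calc ∑ k ∈ P.filter (fun k => ∃ j, 2 ≤ k j), t k
        ≤ ∑ k ∈ P.filter (fun k => ∃ j, 2 ≤ k j), ∑ j : Fin N, (if 2 ≤ k j then t k else 0) :=
          Finset.sum_le_sum h1
      _ ≤ ∑ k ∈ P, ∑ j : Fin N, (if 2 ≤ k j then t k else 0) :=
          Finset.sum_le_sum_of_subset_of_nonneg (Finset.filter_subset _ _)
            (fun k _ _ => Finset.sum_nonneg fun j _ => hite k j)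
      _ = ∑ j : Fin N, ∑ k ∈ P, (if 2 ≤ k j then t k else 0) := Finset.sum_comm
      _ = ∑ j : Fin N, ∑ k ∈ P.filter (fun k => 2 ≤ k j), t k :=
          Finset.sum_congr rfl fun j _ => (Finset.sum_filter _ _).symm
  refine le_trans hstep ?_
  rw [Finset.sum_mul]
  exact Finset.sum_le_sum fun j _ => bad_filter_le N p c j

lemma moment_eq_of_le_one (N p : ℕ) (hp : p ≤ 1) (c : Fin N → ℝ) :
    ∑ k ∈ piAntidiag (univ : Finset (Fin N)) p,
        (Nat.multinomial univ (fun j => 2 * k j) : ℝ) * ∏ j, (c j ^ 2) ^ k j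
      = ((Nat.factorial (2 * p) / (2 ^ p * Nat.factorial p) : ℕ) : ℝ) * (∑ j, c j ^ 2) ^ p := by
  rw [Finset.sum_pow_eq_sum_piAntidiag, Finset.mul_sum]
  apply Finset.sum_congr rfl
  intro k hk
  simp only [Finset.mem_piAntidiag] at hk
  have hsum : ∑ j, k j = p := hk.1
  have h1 : ∀ j, k j ≤ 1 := by
    intro j
    have hle : k j ≤ ∑ i, k i := Finset.single_le_sum (fun i _ => Nat.zero_le _) (Finset.mem_univ j)
    omega
  rw [coeff_eq N p k hsum h1, Nat.cast_mul]
  ring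

lemma mom_le (N q : ℕ) (c : Fin N → ℝ) :
    ∑ k ∈ piAntidiag (univ : Finset (Fin N)) q,
        (Nat.multinomial univ (fun j => 2 * k j) : ℝ) * ∏ j, (c j ^ 2) ^ k j
      ≤ ((2 * q).factorial : ℝ) * (∑ j, c j ^ 2) ^ q := by
  have step : ∀ k ∈ piAntidiag (univ : Finset (Fin N)) q,
      (Nat.multinomial univ (fun j => 2 * k j) : ℝ) * ∏ j, (c j ^ 2) ^ k j
        ≤ ((2 * q).factorial : ℝ) * ∏ j, (c j ^ 2) ^ k j := by
    intro k hk
    simp only [Finset.mem_piAntidiag] at hk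
    have hsum : ∑ j, k j = q := hk.1
    have spec := Nat.multinomial_spec (univ : Finset (Fin N)) (fun j => 2 * k j)
    have hsum2 : ∑ j, 2 * k j = 2 * q := by rw [← Finset.mul_sum, hsum]
    rw [hsum2] at spec
    have hA : Nat.multinomial univ (fun j => 2 * k j) ≤ Nat.factorial (2 * q) := by
      calc Nat.multinomial univ (fun j => 2 * k j)
          ≤ (∏ j, (2 * k j).factorial) * Nat.multinomial univ (fun j => 2 * k j) :=
            Nat.le_mul_of_pos_left _ (Finset.prod_pos fun j _ => Nat.factorial_pos _)
        _ = Nat.factorial (2 * q) := spec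
    exact mul_le_mul_of_nonneg_right (by exact_mod_cast hA)
      (Finset.prod_nonneg fun j _ => pow_nonneg (sq_nonneg _) _)
  calc ∑ k ∈ piAntidiag (univ : Finset (Fin N)) q,
        (Nat.multinomial univ (fun j => 2 * k j) : ℝ) * ∏ j, (c j ^ 2) ^ k j
      ≤ ∑ k ∈ piAntidiag (univ : Finset (Fin N)) q,
          ((2 * q).factorial : ℝ) * ∏ j, (c j ^ 2) ^ k j := Finset.sum_le_sum step
    _ = ((2 * q).factorial : ℝ) * ∑ k ∈ piAntidiag (univ : Finset (Fin N)) q,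
          ∏ j, (c j ^ 2) ^ k j := by rw [Finset.mul_sum]
    _ ≤ ((2 * q).factorial : ℝ) * (∑ j, c j ^ 2) ^ q :=
        mul_le_mul_of_nonneg_left (sum_prod_sq_le N q c) (Nat.cast_nonneg _)

lemma col_sum_sq (N : ℕ) (H : Matrix (Fin N) (Fin N) ℝ)
    (hpm : ∀ i j, H i j = 1 ∨ H i j = -1)
    (horth : ∀ i j, i ≠ j → ∑ k, H i k * H j k = 0) (ε : Fin N → Bool) :
    ∑ j, (∑ i, sgn (ε i) * H i j) ^ 2 = (N : ℝ) ^ 2 := by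
  have hsgn : ∀ b, sgn b * sgn b = 1 := fun b => by cases b <;> norm_num [sgn]
  have hHsq : ∀ i j, H i j * H i j = 1 := fun i j => by
    rcases hpm i j with h | h <;> rw [h] <;> norm_num
  calc ∑ j, (∑ i, sgn (ε i) * H i j) ^ 2
      = ∑ j, ∑ i, ∑ i', (sgn (ε i) * H i j) * (sgn (ε i') * H i' j) := by
        refine Finset.sum_congr rfl fun j _ => ?_
        rw [sq, Finset.sum_mul_sum]
    _ = ∑ i, ∑ i', (sgn (ε i) * sgn (ε i')) * ∑ j, H i j * H i' j := by
        rw [Finset.sum_comm]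
        refine Finset.sum_congr rfl fun i _ => ?_
        rw [Finset.sum_comm]
        refine Finset.sum_congr rfl fun i' _ => ?_
        rw [Finset.mul_sum]
        exact Finset.sum_congr rfl fun j _ => by ring
    _ = ∑ i : Fin N, (N : ℝ) := by
        refine Finset.sum_congr rfl fun i _ => ?_
        rw [Finset.sum_eq_single i]
        · rw [hsgn, one_mul, Finset.sum_congr rfl fun j _ => hHsq i j, Finset.sum_const,
            Finset.card_univ, Fintype.card_fin, nsmul_eq_mul, mul_one]
        · intro i' _ hne
          rw [horth i i' (Ne.symm hne), mul_zero]
        · intro h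
          exact absurd (Finset.mem_univ i) h
    _ = (N : ℝ) ^ 2 := by
        rw [Finset.sum_const, Finset.card_univ, Fintype.card_fin, nsmul_eq_mul]
        ring

/-- Universality of the binary glow: for every `p` there is a constant `C` such
that for every real Hadamard matrix `H` of order `N ≥ 1`, the normalized moment
`E[(φ/N)^(2p)]` is within `C/N` of `(2p-1)!! = (2p)!/(2^p p!)`, the `2p`-th moment
of a standard real Gaussian. Hence `φ/N` is asymptotically Gaussian. -/
theorem binary_glow_universality (p : ℕ) :
    ∃ C : ℝ, ∀ N : ℕ, 1 ≤ N → ∀ H : Matrix (Fin N) (Fin N) ℝ,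
      (∀ i j, H i j = 1 ∨ H i j = -1) →
      (∀ i j, i ≠ j → ∑ k, H i k * H j k = 0) →
      |(1 / (4 : ℝ) ^ N) * ∑ ε : Fin N → Bool, ∑ δ : Fin N → Bool,
          ((∑ i, ∑ j, sgn (ε i) * sgn (δ j) * H i j) / N) ^ (2 * p) -
        ((Nat.factorial (2 * p) / (2 ^ p * Nat.factorial p) : ℕ) : ℝ)| ≤ C / N := by
  classical
  refine ⟨24 * ((Nat.factorial (2 * p) * (Nat.factorial p + 1) : ℕ) : ℝ), ?_⟩
  intro N hN H hpm horth
  have hN0 : (0 : ℝ) < N := by exact_mod_cast hN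
  have h2N : (0 : ℝ) < (2 : ℝ) ^ N := by positivity
  set c : (Fin N → Bool) → Fin N → ℝ := fun ε j => ∑ i, sgn (ε i) * H i j with hc
  set df : ℝ := ((Nat.factorial (2 * p) / (2 ^ p * Nat.factorial p) : ℕ) : ℝ) with hdfdef
  set K : ℝ := ((Nat.factorial (2 * p) * (Nat.factorial p + 1) : ℕ) : ℝ) with hKdef
  have hK0 : 0 ≤ K := Nat.cast_nonneg _
  set M : (Fin N → Bool) → ℝ := fun ε => ∑ k ∈ piAntidiag (univ : Finset (Fin N)) p,
      (Nat.multinomial univ (fun j => 2 * k j) : ℝ) * ∏ j, ((c ε j) ^ 2) ^ k j with hM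
  have hφ : ∀ ε δ : Fin N → Bool,
      (∑ i, ∑ j, sgn (ε i) * sgn (δ j) * H i j) = ∑ j, sgn (δ j) * c ε j := by
    intro ε δ
    rw [Finset.sum_comm]
    refine Finset.sum_congr rfl fun j _ => ?_
    rw [Finset.mul_sum]
    exact Finset.sum_congr rfl fun i _ => by ring
  have hc2 : ∀ ε, ∑ j, (c ε j) ^ 2 = (N : ℝ) ^ 2 := fun ε => col_sum_sq N H hpm horth ε
  have hNpow : (0 : ℝ) < (N : ℝ) ^ (2 * p) := by positivity
  -- inner δ-sum
  have hinner : ∀ ε : Fin N → Bool,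
      ∑ δ : Fin N → Bool, ((∑ i, ∑ j, sgn (ε i) * sgn (δ j) * H i j) / N) ^ (2 * p)
        = 2 ^ N * (M ε / (N : ℝ) ^ (2 * p)) := by
    intro ε
    have h1 : ∀ δ : Fin N → Bool,
        ((∑ i, ∑ j, sgn (ε i) * sgn (δ j) * H i j) / (N : ℝ)) ^ (2 * p)
          = (∑ j, sgn (δ j) * c ε j) ^ (2 * p) / (N : ℝ) ^ (2 * p) := fun δ => by
      rw [hφ ε δ, div_pow]
    simp only [hM]
    rw [Finset.sum_congr rfl fun δ _ => h1 δ, ← Finset.sum_div, rad_moment N p (c ε),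
      mul_div_assoc]
  have hcard : (Finset.univ : Finset (Fin N → Bool)).card = 2 ^ N := by simp
  -- total rewrite
  have htotal : (1 / (4 : ℝ) ^ N) * ∑ ε : Fin N → Bool, ∑ δ : Fin N → Bool,
      ((∑ i, ∑ j, sgn (ε i) * sgn (δ j) * H i j) / N) ^ (2 * p)
      = (1 / (2 : ℝ) ^ N) * ∑ ε : Fin N → Bool, M ε / (N : ℝ) ^ (2 * p) := by
    rw [Finset.sum_congr rfl fun ε _ => hinner ε, ← Finset.mul_sum]
    have h4 : (4 : ℝ) ^ N = 2 ^ N * 2 ^ N := by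
      rw [show (4 : ℝ) = 2 * 2 by norm_num, mul_pow]
    rw [h4]
    field_simp
  rw [htotal]
  -- difference as average
  have hdiff : (1 / (2 : ℝ) ^ N) * (∑ ε : Fin N → Bool, M ε / (N : ℝ) ^ (2 * p)) - df
      = (1 / (2 : ℝ) ^ N) * ∑ ε : Fin N → Bool, (M ε / (N : ℝ) ^ (2 * p) - df) := by
    rw [Finset.sum_sub_distrib, Finset.sum_const, hcard, nsmul_eq_mul, mul_sub]
    push_cast
    field_simp
  rw [hdiff]
  -- per-ε error
  have hper : ∀ ε : Fin N → Bool,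
      |M ε / (N : ℝ) ^ (2 * p) - df|
        = |M ε - df * (N : ℝ) ^ (2 * p)| / (N : ℝ) ^ (2 * p) := by
    intro ε
    rw [show M ε / (N : ℝ) ^ (2 * p) - df
        = (M ε - df * (N : ℝ) ^ (2 * p)) / (N : ℝ) ^ (2 * p) by field_simp,
      abs_div, abs_of_pos hNpow]
  have hNN : ((N : ℝ) ^ 2) ^ p = (N : ℝ) ^ (2 * p) := (pow_mul _ 2 p).symm
  by_cases hp : p ≤ 1
  · -- exact case
    have hzero : ∀ ε : Fin N → Bool, M ε / (N : ℝ) ^ (2 * p) - df = 0 := by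
      intro ε
      rw [hM]
      simp only
      rw [moment_eq_of_le_one N p hp (c ε), hc2 ε, hNN]
      field_simp
      rw [hdfdef, sub_self]
    rw [Finset.sum_congr rfl fun ε _ => hzero ε, Finset.sum_const, smul_zero, mul_zero, abs_zero]
    positivity
  · push_neg at hp
    have hp2 : 2 ≤ p := hp
    -- fourth moment bound
    have hfourth : ∑ ε : Fin N → Bool, ∑ j, (c ε j) ^ 4
        ≤ 2 ^ N * (24 * (N : ℝ) ^ 3) := by
      rw [Finset.sum_comm]
      have hcol : ∀ j : Fin N, ∑ ε : Fin N → Bool, (c ε j) ^ 4 ≤ 2 ^ N * (24 * (N : ℝ) ^ 2) := by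
        intro j
        have h4 : ∀ ε : Fin N → Bool, (c ε j) ^ 4 = (∑ i, sgn (ε i) * H i j) ^ (2 * 2) := by
          intro ε; norm_num; rfl
        rw [Finset.sum_congr rfl fun ε _ => h4 ε, rad_moment N 2 (fun i => H i j)]
        have hHsq : ∑ i, (H i j) ^ 2 = (N : ℝ) := by
          have : ∀ i : Fin N, (H i j) ^ 2 = 1 := fun i => by
            rcases hpm i j with h | h <;> rw [h] <;> norm_num
          rw [Finset.sum_congr rfl fun i _ => this i, Finset.sum_const, Finset.card_univ,
            Fintype.card_fin, nsmul_eq_mul, mul_one]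
        have := mom_le N 2 (fun i => H i j)
        rw [hHsq] at this
        have h24 : ((2 * 2).factorial : ℝ) = 24 := by norm_num [Nat.factorial]
        rw [h24] at this
        exact mul_le_mul_of_nonneg_left this (le_of_lt h2N)
      calc ∑ j, ∑ ε : Fin N → Bool, (c ε j) ^ 4
          ≤ ∑ j : Fin N, 2 ^ N * (24 * (N : ℝ) ^ 2) := Finset.sum_le_sum fun j _ => hcol j
        _ = (N : ℝ) * (2 ^ N * (24 * (N : ℝ) ^ 2)) := by
            rw [Finset.sum_const, Finset.card_univ, Fintype.card_fin, nsmul_eq_mul]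
        _ = 2 ^ N * (24 * (N : ℝ) ^ 3) := by ring
    -- per-ε bound from moment_compare
    have hbound : ∀ ε : Fin N → Bool,
        |M ε - df * (N : ℝ) ^ (2 * p)|
          ≤ K * ((∑ j, (c ε j) ^ 4) * (N : ℝ) ^ (2 * p - 4)) := by
      intro ε
      have := moment_compare N p (c ε)
      rw [hc2 ε, hNN] at this
      refine le_trans this ?_
      have hexp : ((N : ℝ) ^ 2) ^ (p - 2) = (N : ℝ) ^ (2 * p - 4) := by
        rw [← pow_mul]
        congr 1
        omega
      rw [hexp]
    -- put it together
    rw [abs_mul, abs_of_pos (by positivity : (0:ℝ) < 1 / (2:ℝ) ^ N)]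
    calc (1 / (2 : ℝ) ^ N) * |∑ ε : Fin N → Bool, (M ε / (N : ℝ) ^ (2 * p) - df)|
        ≤ (1 / (2 : ℝ) ^ N) * ∑ ε : Fin N → Bool, |M ε / (N : ℝ) ^ (2 * p) - df| :=
          mul_le_mul_of_nonneg_left (Finset.abs_sum_le_sum_abs _ _) (by positivity)
      _ = (1 / (2 : ℝ) ^ N) * ∑ ε : Fin N → Bool,
            |M ε - df * (N : ℝ) ^ (2 * p)| / (N : ℝ) ^ (2 * p) := by
          rw [Finset.sum_congr rfl fun ε _ => hper ε]
      _ ≤ (1 / (2 : ℝ) ^ N) * ∑ ε : Fin N → Bool,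
            K * ((∑ j, (c ε j) ^ 4) * (N : ℝ) ^ (2 * p - 4)) / (N : ℝ) ^ (2 * p) := by
          refine mul_le_mul_of_nonneg_left (Finset.sum_le_sum fun ε _ => ?_) (by positivity)
          gcongr
          exact hbound ε
      _ = (K * (N : ℝ) ^ (2 * p - 4) / (N : ℝ) ^ (2 * p) / (2:ℝ) ^ N)
            * ∑ ε : Fin N → Bool, ∑ j, (c ε j) ^ 4 := by
          rw [Finset.mul_sum, Finset.mul_sum]
          refine Finset.sum_congr rfl fun ε _ => ?_
          ring
      _ ≤ (K * (N : ℝ) ^ (2 * p - 4) / (N : ℝ) ^ (2 * p) / (2:ℝ) ^ N)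
            * (2 ^ N * (24 * (N : ℝ) ^ 3)) := by
          refine mul_le_mul_of_nonneg_left hfourth ?_
          positivity
      _ = 24 * K * ((N : ℝ) ^ (2 * p - 4) * (N : ℝ) ^ 3 / (N : ℝ) ^ (2 * p)) := by
          field_simp
      _ = 24 * K / N := by
          rw [show (N:ℝ) ^ (2 * p - 4) * (N:ℝ) ^ 3 = (N:ℝ) ^ (2 * p - 1) from by
                rw [← pow_add]; congr 1; omega,
              show (N:ℝ) ^ (2 * p) = (N:ℝ) ^ (2 * p - 1) * (N:ℝ) from by
                rw [← pow_succ]; congr 1; omega]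
          rw [div_mul_eq_div_div, div_self (by positivity : (N:ℝ) ^ (2*p-1) ≠ 0), mul_one_div]
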